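/- For every integer m ≥ 3 divisible by 4, χ'_st(C_m □ P_2) = 4; that is, the prism over a cycle of length divisible by 4 has star chromatic index exactly 4. -/
import Mathlib


open SimpleGraph

/-- A star edge-coloring with `k` colors: a proper edge-coloring (adjacent edges get distinct
colors) such that no path with four edges and no cycle with four edges is bichromatic. -/
def IsStarEdgeColoring {V : Type*} (G : SimpleGraph V) {k : ℕ} (C : Sym2 V → Fin k) : Prop :=
  (∀ e₁ ∈ G.edgeSet, ∀ e₂ ∈ G.edgeSet, e₁ ≠ e₂ → (∃ v, v ∈ e₁ ∧ v ∈ e₂) → C e₁ ≠ C e₂) ∧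
  (∀ (u v : V) (w : G.Walk u v), w.length = 4 → w.IsPath →
    ¬ ∃ a b : Fin k, ∀ e ∈ w.edges, C e = a ∨ C e = b) ∧
  (∀ (u : V) (w : G.Walk u u), w.length = 4 → w.IsCycle →
    ¬ ∃ a b : Fin k, ∀ e ∈ w.edges, C e = a ∨ C e = b)

/-- The star chromatic index: the least `k` admitting a star edge-coloring with `k` colors. -/
noncomputable def starChromaticIndex {V : Type*} (G : SimpleGraph V) : ℕ :=
  sInf {k | ∃ C : Sym2 V → Fin k, IsStarEdgeColoring G C}

/-! ### The cube `Q₃ = C₄ □ P₂` and its star 4-edge-coloring -/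

abbrev VQ := Fin 4 × Fin 2

abbrev Q3 : SimpleGraph VQ := cycleGraph 4 □ pathGraph 2

instance pg2adjdec : DecidableRel (pathGraph 2).Adj :=
  fun _ _ => decidable_of_iff _ pathGraph_adj.symm

instance q3adjdec : DecidableRel Q3.Adj :=
  fun _ _ => decidable_of_iff _ boxProd_adj.symm

/-- Boolean adjacency for `Q₃`. -/
def adjB : VQ → VQ → Bool := fun x y =>
  (x.2 = y.2 && ((x.1 = y.1 + 1) || (y.1 = x.1 + 1))) || (x.1 = y.1 && x.2 ≠ y.2)

lemma adjB_iff : ∀ x y : VQ, adjB x y = true ↔ Q3.Adj x y := by decide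

/-- The coloring function on (ordered) pairs of cube vertices. -/
def gcol : VQ → VQ → Fin 4 := fun x y =>
  if x.1 = y.1 then -x.1
  else if y.1 = x.1 + 1 then (if x.2 = 1 ∧ y.2 = 1 then 2 else 1) - x.1
  else if x.1 = y.1 + 1 then (if x.2 = 1 ∧ y.2 = 1 then 2 else 1) - y.1
  else 0

/-- A star edge-coloring of the cube graph with 4 colors. -/
def C4 : Sym2 VQ → Fin 4 := Sym2.lift ⟨gcol, by decide⟩

theorem L1 : ∀ x a c : VQ, adjB x a → adjB x c → a ≠ c →
    C4 s(x, a) ≠ C4 s(x, c) := by decide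

set_option synthInstance.maxSize 2000 in
set_option maxRecDepth 4000 in
set_option maxHeartbeats 2000000 in
theorem L2 : ∀ v0 v1 v2 v3 v4 : VQ, adjB v0 v1 → adjB v1 v2 → adjB v2 v3 →
    adjB v3 v4 → v0 ≠ v2 → v1 ≠ v3 → v2 ≠ v4 → ∀ a b : Fin 4,
    ¬((C4 s(v0,v1) = a ∨ C4 s(v0,v1) = b) ∧ (C4 s(v1,v2) = a ∨ C4 s(v1,v2) = b) ∧
      (C4 s(v2,v3) = a ∨ C4 s(v2,v3) = b) ∧ (C4 s(v3,v4) = a ∨ C4 s(v3,v4) = b)) := by decide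

/-! ### Destructuring walks of length 4 -/

lemma walk4 {V : Type*} {G : SimpleGraph V} {u v : V} (w : G.Walk u v) (h : w.length = 4) :
    ∃ (x y z : V) (_ : G.Adj u x) (_ : G.Adj x y) (_ : G.Adj y z) (_ : G.Adj z v),
      w.edges = [s(u,x), s(x,y), s(y,z), s(z,v)] ∧ w.support = [u,x,y,z,v] := by
  cases w with
  | nil => simp at h
  | cons h1 p1 =>
    cases p1 with
    | nil => simp at h
    | cons h2 p2 =>
      cases p2 with
      | nil => simp at h
      | cons h3 p3 =>
        cases p3 with
        | nil => simp at h
        | cons h4 p4 =>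
          cases p4 with
          | nil => exact ⟨_, _, _, h1, h2, h3, h4, by simp, by simp⟩
          | cons h5 p5 => simp [SimpleGraph.Walk.length_cons] at h

/-! ### The prism, modular arithmetic helpers -/

/-- The `m`-prism with `m = k + 4`. -/
abbrev GP (k : ℕ) : SimpleGraph (Fin (k+4) × Fin 2) := cycleGraph (k+4) □ pathGraph 2

lemma step_mod {M a b : ℕ} (h4 : 4 ∣ M) (ha : a < M) (hb : b < M)
    (h : ((M - b) + a) % M = 1) : ((4 - b % 4) + a % 4) % 4 = 1 := by
  rcases Nat.lt_or_ge ((M - b) + a) M with h' | h'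
  · rw [Nat.mod_eq_of_lt h'] at h; omega
  · rw [Nat.mod_eq_sub_mod h', Nat.mod_eq_of_lt (by omega)] at h; omega

/-- The covering projection from the `(k+4)`-prism to the cube. -/
def fmap (k : ℕ) : Fin (k+4) × Fin 2 → VQ :=
  fun x => (⟨x.1.val % 4, by omega⟩, x.2)

lemma cyc_mod {k : ℕ} (h4 : 4 ∣ (k+4)) {u v : Fin (k+4)}
    (h : (u - v).val = 1) : ((fmap k (u, 0)).1 - (fmap k (v, 0)).1).val = 1 := by
  rw [Fin.sub_def] at h ⊢
  exact step_mod h4 u.isLt v.isLt h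

lemma fmap_hom {k : ℕ} (h4 : 4 ∣ (k+4)) {u v : Fin (k+4) × Fin 2}
    (h : (GP k).Adj u v) : Q3.Adj (fmap k u) (fmap k v) := by
  rw [boxProd_adj] at h ⊢
  rcases h with ⟨hc, he⟩ | ⟨hp, he⟩
  · left
    refine ⟨?_, by simp [fmap, he]⟩
    rw [cycleGraph_adj'] at hc ⊢
    rcases hc with h | h
    · exact Or.inl (cyc_mod h4 h)
    · exact Or.inr (cyc_mod h4 h)
  · right
    exact ⟨hp, by simp [fmap, he]⟩

lemma fmap_locinj {k : ℕ} (h4 : 4 ∣ (k+4)) {b a c : Fin (k+4) × Fin 2}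
    (h1 : (GP k).Adj b a) (h2 : (GP k).Adj b c) (hne : a ≠ c) :
    fmap k a ≠ fmap k c := by
  rw [boxProd_adj] at h1 h2
  intro heq
  have h2eq : a.2 = c.2 := congrArg (fun z : VQ => z.2) heq
  have h1eq : a.1.val % 4 = c.1.val % 4 := congrArg (fun z => z.1.val) heq
  rcases h1 with ⟨hc1, he1⟩ | ⟨hp1, he1⟩ <;> rcases h2 with ⟨hc2, he2⟩ | ⟨hp2, he2⟩
  · -- both cycle steps
    have hane : a.1 ≠ c.1 := by
      intro h; exact hne (Prod.ext h h2eq)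
    rw [cycleGraph_adj'] at hc1 hc2
    have key : ∀ x y : Fin (k+4), (x - y).val = 1 →
        ((4 - y.val % 4) + x.val % 4) % 4 = 1 := by
      intro x y hxy
      rw [Fin.sub_def] at hxy
      exact step_mod h4 x.isLt y.isLt hxy
    rcases hc1 with h1' | h1' <;> rcases hc2 with h2' | h2'
    · -- b - a = 1, b - c = 1 : a = c
      apply hane
      have : b.1 - a.1 = b.1 - c.1 := Fin.ext (by rw [h1', h2'])
      exact sub_right_inj.mp this
    · have k1 := key _ _ h1'
      have k2 := key _ _ h2'
      omega
    · have k1 := key _ _ h1'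
      have k2 := key _ _ h2'
      omega
    · apply hane
      have : a.1 - b.1 = c.1 - b.1 := Fin.ext (by rw [h1', h2'])
      exact sub_left_inj.mp this
  · -- cycle then spoke
    exact hp2.ne (he1.trans h2eq)
  · exact hp1.ne (he2.trans h2eq.symm)
  · -- both spokes
    apply hne
    have : a.2 = c.2 := by
      have n1 : b.2 ≠ a.2 := hp1.ne
      have n2 : b.2 ≠ c.2 := hp2.ne
      have := a.2.isLt; have := c.2.isLt; have := b.2.isLt
      apply Fin.ext
      omega
    exact Prod.ext (he1 ▸ he2 ▸ rfl) this

/-! ### The star 4-edge-coloring of the prism -/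

lemma star4 {k : ℕ} (h4 : 4 ∣ (k+4)) :
    IsStarEdgeColoring (GP k) (fun e => C4 (Sym2.map (fmap k) e)) := by
  refine ⟨?_, ?_, ?_⟩
  · -- properness
    rintro e1 he1 e2 he2 hne ⟨v, hv1, hv2⟩
    obtain ⟨w1, rfl⟩ := Sym2.mem_iff_exists.mp hv1
    obtain ⟨w2, rfl⟩ := Sym2.mem_iff_exists.mp hv2
    rw [mem_edgeSet] at he1 he2
    have hw : w1 ≠ w2 := by
      rintro rfl; exact hne rfl
    simp only [Sym2.map_pair_eq]
    exact L1 _ _ _ ((adjB_iff _ _).2 (fmap_hom h4 he1))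
      ((adjB_iff _ _).2 (fmap_hom h4 he2)) (fmap_locinj h4 he1 he2 hw)
  · -- no bichromatic path of length 4
    rintro u v w hlen hp ⟨A, B, hall⟩
    obtain ⟨x, y, z, h1, h2, h3, hh4, hE, hS⟩ := walk4 w hlen
    have hnd : ([u,x,y,z,v] : List _).Nodup := by rw [← hS]; exact hp.support_nodup
    have huy : u ≠ y := fun h => by subst h; simp at hnd
    have hxz : x ≠ z := fun h => by subst h; simp at hnd
    have hyv : y ≠ v := fun h => by subst h; simp at hnd
    have c1 := hall s(u,x) (by rw [hE]; simp)
    have c2 := hall s(x,y) (by rw [hE]; simp)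
    have c3 := hall s(y,z) (by rw [hE]; simp)
    have c4 := hall s(z,v) (by rw [hE]; simp)
    simp only [Sym2.map_pair_eq] at c1 c2 c3 c4
    exact L2 (fmap k u) (fmap k x) (fmap k y) (fmap k z) (fmap k v)
      ((adjB_iff _ _).2 (fmap_hom h4 h1)) ((adjB_iff _ _).2 (fmap_hom h4 h2))
      ((adjB_iff _ _).2 (fmap_hom h4 h3)) ((adjB_iff _ _).2 (fmap_hom h4 hh4))
      (fmap_locinj h4 h1.symm h2 huy) (fmap_locinj h4 h2.symm h3 hxz)
      (fmap_locinj h4 h3.symm hh4 hyv) A B ⟨c1, c2, c3, c4⟩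
  · -- no bichromatic cycle of length 4
    rintro u w hlen hc ⟨A, B, hall⟩
    obtain ⟨x, y, z, h1, h2, h3, hh4, hE, hS⟩ := walk4 w hlen
    have hnd : ([x,y,z,u] : List _).Nodup := by
      have hT := hc.2; rw [hS] at hT; exact hT
    have hyu : y ≠ u := fun h => by subst h; simp at hnd
    have hxz : x ≠ z := fun h => by subst h; simp at hnd
    have c1 := hall s(u,x) (by rw [hE]; simp)
    have c2 := hall s(x,y) (by rw [hE]; simp)
    have c3 := hall s(y,z) (by rw [hE]; simp)
    have c4 := hall s(z,u) (by rw [hE]; simp)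
    simp only [Sym2.map_pair_eq] at c1 c2 c3 c4
    exact L2 (fmap k u) (fmap k x) (fmap k y) (fmap k z) (fmap k u)
      ((adjB_iff _ _).2 (fmap_hom h4 h1)) ((adjB_iff _ _).2 (fmap_hom h4 h2))
      ((adjB_iff _ _).2 (fmap_hom h4 h3)) ((adjB_iff _ _).2 (fmap_hom h4 hh4))
      (fmap_locinj h4 h1.symm h2 (Ne.symm hyu)) (fmap_locinj h4 h2.symm h3 hxz)
      (fmap_locinj h4 h3.symm hh4 hyu) A B ⟨c1, c2, c3, c4⟩

/-! ### Lower bound: fewer than 4 colors is impossible -/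

section Lower

variable (k : ℕ)

def i0 : Fin (k+4) := ⟨0, by omega⟩
def i1 : Fin (k+4) := ⟨1, by omega⟩
def i2 : Fin (k+4) := ⟨2, by omega⟩
def iN : Fin (k+4) := ⟨k+3, by omega⟩

lemma cyc_adj_succ {i j : Fin (k+4)} (h : j.val = i.val + 1) :
    (cycleGraph (k+4)).Adj i j := by
  rw [cycleGraph_adj']
  right
  rw [Fin.sub_def]
  show ((k + 4 - i.val) + j.val) % (k+4) = 1
  have hi := i.isLt
  have : (k + 4 - i.val) + j.val = (k+4) + 1 := by omega
  rw [this, Nat.add_mod_left]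
  exact Nat.mod_eq_of_lt (by omega)

lemma cyc_adj_wrap : (cycleGraph (k+4)).Adj (iN k) (i0 k) := by
  rw [cycleGraph_adj']
  right
  rw [Fin.sub_def]
  show ((k + 4 - (k+3)) + 0) % (k+4) = 1
  have : (k + 4 - (k+3)) + 0 = 1 := by omega
  rw [this]
  exact Nat.mod_eq_of_lt (by omega)

lemma wrap_adj (l : Fin 2) : (GP k).Adj (iN k, l) (i0 k, l) :=
  boxProd_adj.2 (Or.inl ⟨cyc_adj_wrap k, rfl⟩)

lemma spoke_adj (i : Fin (k+4)) : (GP k).Adj (i, 0) (i, 1) :=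
  boxProd_adj.2 (Or.inr ⟨by rw [pathGraph_adj]; left; rfl, rfl⟩)

lemma level_adj {i j : Fin (k+4)} (h : j.val = i.val + 1) (l : Fin 2) :
    (GP k).Adj (i, l) (j, l) :=
  boxProd_adj.2 (Or.inl ⟨cyc_adj_succ k h, rfl⟩)

/-- properness, in convenient form -/
lemma proper_ne {j : ℕ} {C : Sym2 (Fin (k+4) × Fin 2) → Fin j}
    (hC : IsStarEdgeColoring (GP k) C) {v w1 w2 : Fin (k+4) × Fin 2}
    (h1 : (GP k).Adj v w1) (h2 : (GP k).Adj v w2) (h : w1 ≠ w2) :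
    C s(v, w1) ≠ C s(v, w2) := by
  apply hC.1 _ (((GP k).mem_edgeSet).2 h1) _ (((GP k).mem_edgeSet).2 h2)
  · intro he
    rw [Sym2.eq_iff] at he
    rcases he with ⟨-, h'⟩ | ⟨-, h'⟩
    · exact h h'
    · exact h1.ne' h'
  · exact ⟨v, Sym2.mem_mk_left _ _, Sym2.mem_mk_left _ _⟩

/-- With at most 2 colors there is no proper edge coloring. -/
lemma no_small {j : ℕ} (hj : j ≤ 2) {C : Sym2 (Fin (k+4) × Fin 2) → Fin j}
    (hC : IsStarEdgeColoring (GP k) C) : False := by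
  set A : Fin (k+4) × Fin 2 := (i0 k, 0) with hA
  have hAB : (GP k).Adj A (i1 k, 0) := level_adj k rfl 0
  have hAD : (GP k).Adj A (i0 k, 1) := spoke_adj k _
  have hAA' : (GP k).Adj A (iN k, 0) := (wrap_adj k 0).symm
  have n1 : ((i1 k : Fin (k+4)), (0 : Fin 2)) ≠ (i0 k, 1) := by
    intro h; exact absurd (congrArg (fun p => p.1.val) h) (by simp [i1, i0])
  have n2 : ((i1 k : Fin (k+4)), (0 : Fin 2)) ≠ (iN k, 0) := by
    intro h
    have := congrArg (fun p => p.1.val) h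
    simp [i1, iN] at this
  have n3 : ((i0 k : Fin (k+4)), (1 : Fin 2)) ≠ (iN k, 0) := by
    intro h; exact absurd (congrArg (fun p => p.1.val) h) (by simp [i0, iN])
  have d1 := proper_ne k hC hAB hAD n1
  have d2 := proper_ne k hC hAB hAA' n2
  have d3 := proper_ne k hC hAD hAA' n3
  have e1 : (C s(A, (i1 k, 0))).val ≠ (C s(A, (i0 k, 1))).val :=
    fun h => d1 (Fin.ext h)
  have e2 : (C s(A, (i1 k, 0))).val ≠ (C s(A, (iN k, 0))).val :=
    fun h => d2 (Fin.ext h)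
  have e3 : (C s(A, (i0 k, 1))).val ≠ (C s(A, (iN k, 0))).val :=
    fun h => d3 (Fin.ext h)
  have := (C s(A, (i1 k, 0))).isLt
  have := (C s(A, (i0 k, 1))).isLt
  have := (C s(A, (iN k, 0))).isLt
  omega

/-- With exactly 3 colors there is no star edge coloring. -/
lemma no_three {C : Sym2 (Fin (k+4) × Fin 2) → Fin 3}
    (hC : IsStarEdgeColoring (GP k) C) : False := by
  -- the square A B Cc D with extra vertices C' (beyond Cc) and D' (beyond D)
  set A : Fin (k+4) × Fin 2 := (i0 k, 0) with hAdef
  set B : Fin (k+4) × Fin 2 := (i1 k, 0) with hBdef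
  set Cc : Fin (k+4) × Fin 2 := (i1 k, 1) with hCdef
  set D : Fin (k+4) × Fin 2 := (i0 k, 1) with hDdef
  set C' : Fin (k+4) × Fin 2 := (i2 k, 1) with hC'def
  set D' : Fin (k+4) × Fin 2 := (iN k, 1) with hD'def
  have hAB : (GP k).Adj A B := level_adj k rfl 0
  have hBC : (GP k).Adj B Cc := spoke_adj k _
  have hDC : (GP k).Adj D Cc := level_adj k rfl 1
  have hAD : (GP k).Adj A D := spoke_adj k _
  have hCC' : (GP k).Adj Cc C' := level_adj k rfl 1
  have hDD' : (GP k).Adj D D' := (wrap_adj k 1).symm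
  -- distinctness of vertices
  have ne1 : ∀ (x y : Fin (k+4)) (l l' : Fin 2), x.val ≠ y.val → ((x,l) : Fin (k+4) × Fin 2) ≠ (y,l') := by
    intro x y l l' hxy h
    exact hxy (congrArg (fun p => p.1.val) h)
  have ne2 : ∀ (x : Fin (k+4)) (l l' : Fin 2), l ≠ l' → ((x,l) : Fin (k+4) × Fin 2) ≠ (x,l') := by
    intro x l l' hll h
    exact hll (congrArg Prod.snd h)
  have v01 : (i0 k).val ≠ (i1 k).val := by simp [i0, i1]
  have v02 : (i0 k).val ≠ (i2 k).val := by simp [i0, i2]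
  have v0N : (i0 k).val ≠ (iN k).val := by simp [i0, iN]
  have v12 : (i1 k).val ≠ (i2 k).val := by simp [i1, i2]
  have v1N : (i1 k).val ≠ (iN k).val := by simp [i1, iN]
  have v2N : (i2 k).val ≠ (iN k).val := by simp [i2, iN]
  have l01 : (0 : Fin 2) ≠ 1 := by decide
  -- colors
  set α := C s(A, B) with hα
  set β := C s(B, Cc) with hβ
  set γ := C s(Cc, D) with hγ
  set δ := C s(D, A) with hδ
  set ε := C s(Cc, C') with hε
  set ζ := C s(D, D') with hζ
  have sw : ∀ x y : Fin (k+4) × Fin 2, s(x, y) = s(y, x) := fun x y => Sym2.eq_swap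
  have h1 : α ≠ β := by
    have := proper_ne k hC hAB.symm hBC (ne1 _ _ _ _ v01)
    rwa [sw B A] at this
  have h2 : β ≠ γ := by
    have := proper_ne k hC hBC.symm hDC.symm (ne1 _ _ _ _ (Ne.symm v01))
    rwa [sw Cc B] at this
  have h3 : γ ≠ δ := by
    have := proper_ne k hC hDC hAD.symm (ne1 _ _ _ _ (Ne.symm v01))
    rwa [sw D Cc] at this
  have h4 : δ ≠ α := by
    have := proper_ne k hC hAD hAB (ne1 (i0 k) (i1 k) 1 0 (Ne.symm v01).symm)
    rwa [sw A D] at this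
  have h5 : β ≠ ε := by
    have := proper_ne k hC hBC.symm hCC' (ne1 _ _ _ _ v12)
    rwa [sw Cc B] at this
  have h6 : γ ≠ ε := proper_ne k hC hDC.symm hCC' (ne1 _ _ _ _ v02)
  have h7 : γ ≠ ζ := by
    have := proper_ne k hC hDC hDD' (ne1 _ _ _ _ v1N)
    rwa [sw D Cc] at this
  have h8 : δ ≠ ζ := proper_ne k hC hAD.symm hDD' (ne1 _ _ _ _ v0N)
  -- val versions
  have V : ∀ x y : Fin 3, x ≠ y → x.val ≠ y.val := fun x y h h' => h (Fin.ext h')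
  have edge_ne : ∀ {p q r t : Fin (k+4) × Fin 2}, (p ≠ r ∨ q ≠ t) → (p ≠ t ∨ q ≠ r) →
      s(p, q) ≠ s(r, t) := by
    intro p q r t hh1 hh2 h
    rw [Sym2.eq_iff] at h
    rcases h with ⟨f1, f2⟩ | ⟨f1, f2⟩
    · rcases hh1 with h | h <;> exact h ‹_›
    · rcases hh2 with h | h <;> exact h ‹_›
  have nAB : A ≠ B := ne1 _ _ _ _ v01
  have nACc : A ≠ Cc := ne1 _ _ _ _ v01
  have nAD : A ≠ D := ne2 _ _ _ l01
  have nAC' : A ≠ C' := ne1 _ _ _ _ v02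
  have nAD' : A ≠ D' := ne1 _ _ _ _ v0N
  have nBCc : B ≠ Cc := ne2 _ _ _ l01
  have nBD : B ≠ D := ne1 _ _ _ _ (Ne.symm v01)
  have nBC' : B ≠ C' := ne1 _ _ _ _ v12
  have nBD' : B ≠ D' := ne1 _ _ _ _ v1N
  have nCcD : Cc ≠ D := ne1 _ _ _ _ (Ne.symm v01)
  have nCcC' : Cc ≠ C' := ne1 _ _ _ _ v12
  have nCcD' : Cc ≠ D' := ne1 _ _ _ _ v1N
  have nDC' : D ≠ C' := ne1 _ _ _ _ v02
  have nDD' : D ≠ D' := ne1 _ _ _ _ v0N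
  have sAB := nAB.symm; have sACc := nACc.symm; have sAD := nAD.symm
  have sAC' := nAC'.symm; have sAD' := nAD'.symm; have sBCc := nBCc.symm
  have sBD := nBD.symm; have sBC' := nBC'.symm; have sBD' := nBD'.symm
  have sCcD := nCcD.symm; have sCcC' := nCcC'.symm; have sCcD' := nCcD'.symm
  have sDC' := nDC'.symm; have sDD' := nDD'.symm
  have e12 : s(A,B) ≠ s(B,Cc) := edge_ne (Or.inl nAB) (Or.inl nACc)
  have e13 : s(A,B) ≠ s(Cc,D) := edge_ne (Or.inl nACc) (Or.inl nAD)
  have e14 : s(A,B) ≠ s(D,A) := edge_ne (Or.inl nAD) (Or.inr nBD)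
  have e23 : s(B,Cc) ≠ s(Cc,D) := edge_ne (Or.inl nBCc) (Or.inl nBD)
  have e24 : s(B,Cc) ≠ s(D,A) := edge_ne (Or.inl nBD) (Or.inr nCcD)
  have e34 : s(Cc,D) ≠ s(D,A) := edge_ne (Or.inl nCcD) (Or.inl nACc.symm)
  by_cases hac : α = γ <;> by_cases hbd : β = δ
  · -- bichromatic 4-cycle A B Cc D A
    set W : (GP k).Walk A A :=
      .cons hAB (.cons hBC (.cons hDC.symm (.cons hAD.symm .nil))) with hW
    refine hC.2.2 A W rfl ?_ ⟨α, β, ?_⟩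
    · rw [SimpleGraph.Walk.isCycle_def]
      refine ⟨?_, by simp [hW], ?_⟩
      · rw [SimpleGraph.Walk.isTrail_def]
        simp only [hW, SimpleGraph.Walk.edges_cons, SimpleGraph.Walk.edges_nil,
          List.nodup_cons, List.mem_cons, List.not_mem_nil, or_false, not_or,
          List.nodup_nil, and_true]
        tauto
      · simp only [hW, SimpleGraph.Walk.support_cons, SimpleGraph.Walk.support_nil,
          List.tail_cons, List.nodup_cons, List.mem_cons, List.not_mem_nil, or_false,
          not_or, List.nodup_nil, and_true]
        tauto
    · intro e he
      simp only [hW, SimpleGraph.Walk.edges_cons, SimpleGraph.Walk.edges_nil,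
        List.mem_cons, List.not_mem_nil, or_false] at he
      rcases he with rfl | rfl | rfl | rfl
      · exact Or.inl hα.symm
      · exact Or.inr hβ.symm
      · exact Or.inl (hγ.symm.trans hac.symm)
      · exact Or.inr (hδ.symm.trans hbd.symm)
  · -- α = γ, β ≠ δ : the path B A D Cc C' is bichromatic
    have heδ : ε = δ := by
      apply Fin.ext
      have := V _ _ h5; have := V _ _ h6; have := V _ _ h2; have := V _ _ h3
      have := V _ _ (hac ▸ h4 : δ ≠ γ).symm
      have hbd' := V _ _ (fun h => hbd h : β ≠ δ)
      have := α.isLt; have := β.isLt; have := γ.isLt; have := δ.isLt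
      have := ε.isLt
      omega
    set W : (GP k).Walk B C' :=
      .cons hAB.symm (.cons hAD (.cons hDC (.cons hCC' .nil))) with hW
    refine hC.2.1 B C' W rfl ?_ ⟨α, δ, ?_⟩
    · rw [SimpleGraph.Walk.isPath_def]
      simp only [hW, SimpleGraph.Walk.support_cons, SimpleGraph.Walk.support_nil,
        List.nodup_cons, List.mem_cons, List.not_mem_nil, or_false, not_or,
        List.nodup_nil, and_true]
      tauto
    · intro e he
      simp only [hW, SimpleGraph.Walk.edges_cons, SimpleGraph.Walk.edges_nil,
        List.mem_cons, List.not_mem_nil, or_false] at he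
      rcases he with rfl | rfl | rfl | rfl
      · left; rw [sw B A]
      · right; rw [sw A D]
      · left; rw [sw D Cc]; exact hγ.symm.trans hac.symm
      · right; exact hε.symm.trans heδ
  · -- β = δ, α ≠ γ : the path Cc B A D D' is bichromatic
    have heζ : ζ = α := by
      apply Fin.ext
      have := V _ _ h7; have := V _ _ h8; have := V _ _ h3; have := V _ _ h4
      have := V _ _ (hbd ▸ h1 : α ≠ δ)
      have hac' := V _ _ (fun h => hac h : α ≠ γ)
      have := α.isLt; have := β.isLt; have := γ.isLt; have := δ.isLt
      have := ζ.isLt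
      omega
    set W : (GP k).Walk Cc D' :=
      .cons hBC.symm (.cons hAB.symm (.cons hAD (.cons hDD' .nil))) with hW
    refine hC.2.1 Cc D' W rfl ?_ ⟨α, β, ?_⟩
    · rw [SimpleGraph.Walk.isPath_def]
      simp only [hW, SimpleGraph.Walk.support_cons, SimpleGraph.Walk.support_nil,
        List.nodup_cons, List.mem_cons, List.not_mem_nil, or_false, not_or,
        List.nodup_nil, and_true]
      tauto
    · intro e he
      simp only [hW, SimpleGraph.Walk.edges_cons, SimpleGraph.Walk.edges_nil,
        List.mem_cons, List.not_mem_nil, or_false] at he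
      rcases he with rfl | rfl | rfl | rfl
      · right; rw [sw Cc B]
      · left; rw [sw B A]
      · right; rw [sw A D]; exact hδ.symm.trans hbd.symm
      · left; exact hζ.symm.trans heζ
  · -- α, β, γ, δ pairwise distinct in Fin 3: impossible
    have := V _ _ h1; have := V _ _ h2; have := V _ _ h3; have := V _ _ h4
    have := V _ _ (fun h => hac h : α ≠ γ)
    have := V _ _ (fun h => hbd h : β ≠ δ)
    have := α.isLt; have := β.isLt; have := γ.isLt; have := δ.isLt
    omega

end Lower

theorem stmt_15 (m : ℕ) (hm : 3 ≤ m) (h4 : 4 ∣ m) :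
    starChromaticIndex (cycleGraph m □ pathGraph 2) = 4 := by
  have hm4 : 4 ≤ m := by omega
  obtain ⟨k, rfl⟩ : ∃ k, m = k + 4 := ⟨m - 4, by omega⟩
  have hmem : 4 ∈ {n | ∃ C : Sym2 (Fin (k+4) × Fin 2) → Fin n,
      IsStarEdgeColoring (cycleGraph (k+4) □ pathGraph 2) C} :=
    ⟨fun e => C4 (Sym2.map (fmap k) e), star4 h4⟩
  refine le_antisymm (Nat.sInf_le hmem) (le_csInf ⟨4, hmem⟩ ?_)
  rintro j ⟨C, hC⟩
  by_contra hlt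
  push_neg at hlt
  rcases Nat.lt_or_ge j 3 with hj | hj
  · exact no_small k (by omega) hC
  · have : j = 3 := by omega
    subst this
    exact no_three k hC
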